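/- Let σ > 0, θ(r) = (σ²/2 + √(σ⁴/4 + 2σ² r))/σ², and let F, G be probability distributions on (0,∞) with discount functions h_F, h_G. If h_F(t) ≥ h_G(t) for all t ≥ 0, then ∫₀^∞ ((θ(r)-1)/r) dF(r) ≥ ∫₀^∞ ((θ(r)-1)/r) dG(r), assuming both integrals are finite. -/

import Mathlib

open Real MeasureTheory Set
open scoped ENNReal

/-- The positive root `θ(r)` of `(1/2)σ²θ² - (1/2)σ²θ - r = 0`. -/
noncomputable def θfun (σ r : ℝ) : ℝ :=
  (σ^2 / 2 + Real.sqrt (σ^4 / 4 + 2 * σ^2 * r)) / σ^2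

/-- The discount function induced by the weighting distribution `F`. -/
noncomputable def discount (F : Measure ℝ) (t : ℝ) : ℝ := ∫ r, Real.exp (-r * t) ∂F

lemma lemA {b : ℝ} (hb : 0 < b) :
    ∫ u in Ioi (0:ℝ), u ^ (-(1:ℝ)/2) * Real.exp (-(b*u)) = Real.sqrt π / Real.sqrt b := by
  have h := integral_rpow_mul_exp_neg_mul_Ioi (by norm_num : (0:ℝ) < 1/2) hb
  rw [Real.Gamma_one_half_eq] at h
  have h2 : (1:ℝ)/2 - 1 = -(1:ℝ)/2 := by norm_num
  rw [h2] at h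
  rw [h, ← Real.sqrt_eq_rpow, one_div, Real.sqrt_inv]
  rw [inv_mul_eq_div]

lemma lemAint {b : ℝ} (hb : 0 < b) :
    IntegrableOn (fun u : ℝ => u ^ (-(1:ℝ)/2) * Real.exp (-(b*u))) (Ioi 0) := by
  have h := integrableOn_rpow_mul_exp_neg_mul_rpow (by norm_num : (-1:ℝ) < -(1:ℝ)/2)
    zero_lt_one hb
  refine h.congr_fun (fun x hx => ?_) measurableSet_Ioi
  simp only [Real.rpow_one]
  ring_nf

-- FTC: exp
lemma lemB2 {k : ℝ} :
    ∫ t in (0:ℝ)..1, k * Real.exp (-(k*t)) = 1 - Real.exp (-k) := by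
  have hderiv : ∀ t ∈ uIcc (0:ℝ) 1, HasDerivAt (fun t => -Real.exp (-(k*t)))
      (k * Real.exp (-(k*t))) t := by
    intro t _
    have h1 : HasDerivAt (fun t : ℝ => -(k*t)) (-k) t := by
      simpa using ((hasDerivAt_id t).const_mul k).fun_neg
    have := (Real.hasDerivAt_exp (-(k*t))).comp t h1
    have h2 := this.fun_neg
    refine h2.congr_deriv ?_
    ring
  have hint : IntervalIntegrable (fun t => k * Real.exp (-(k*t))) volume 0 1 :=
    (Continuous.intervalIntegrable (by continuity)) 0 1
  have := intervalIntegral.integral_eq_sub_of_hasDerivAt hderiv hint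
  rw [this]
  simp
  ring

-- FTC: sqrt
lemma lemB {a r : ℝ} (ha : 0 < a) (hr : 0 < r) :
    ∫ t in (0:ℝ)..1, r * (Real.sqrt π / Real.sqrt (a + r*t))
      = 2 * Real.sqrt π * (Real.sqrt (a + r) - Real.sqrt a) := by
  have hpos : ∀ t ∈ uIcc (0:ℝ) 1, 0 < a + r * t := by
    intro t ht
    rw [uIcc_of_le zero_le_one] at ht
    nlinarith [ht.1]
  have hderiv : ∀ t ∈ uIcc (0:ℝ) 1, HasDerivAt (fun t => 2 * Real.sqrt π * Real.sqrt (a + r*t))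
      (r * (Real.sqrt π / Real.sqrt (a + r*t))) t := by
    intro t ht
    have h1 : HasDerivAt (fun t : ℝ => a + r*t) r t := by
      simpa using ((hasDerivAt_id t).const_mul r).const_add a
    have h2 := (Real.hasDerivAt_sqrt (hpos t ht).ne').comp t h1
    have h3 := h2.const_mul (2 * Real.sqrt π)
    refine h3.congr_deriv ?_
    have : Real.sqrt (a + r*t) ≠ 0 := (Real.sqrt_pos.2 (hpos t ht)).ne'
    field_simp
  have hint : IntervalIntegrable (fun t => r * (Real.sqrt π / Real.sqrt (a + r*t))) volume 0 1 := by
    apply ContinuousOn.intervalIntegrable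
    apply ContinuousOn.mul continuousOn_const
    apply ContinuousOn.div continuousOn_const
    · exact (Real.continuous_sqrt.comp (by continuity)).continuousOn
    · intro t ht
      exact (Real.sqrt_pos.2 (hpos t ht)).ne'
  have := intervalIntegral.integral_eq_sub_of_hasDerivAt hderiv hint
  rw [this]
  simp
  ring

-- theta formula
lemma theta_eq {σ r : ℝ} (hσ : 0 < σ) (hr : 0 ≤ r) :
    θfun σ r - 1 = (Real.sqrt 2 / σ) * (Real.sqrt (σ^2/8 + r) - Real.sqrt (σ^2/8)) := by
  have hσ2 : (0:ℝ) < σ^2 := by positivity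
  have h1 : σ^4/4 + 2*σ^2*r = (Real.sqrt 2 * σ)^2 * (σ^2/8 + r) := by
    rw [mul_pow, Real.sq_sqrt (by norm_num : (0:ℝ) ≤ 2)]
    ring
  have h2 : Real.sqrt (σ^4/4 + 2*σ^2*r) = Real.sqrt 2 * σ * Real.sqrt (σ^2/8 + r) := by
    rw [h1, Real.sqrt_mul (sq_nonneg _), Real.sqrt_sq (by positivity)]
  have h3 : Real.sqrt (σ^2/8) = σ / (2 * Real.sqrt 2) := by
    rw [show σ^2/8 = (σ / (2 * Real.sqrt 2))^2 by
      rw [div_pow, mul_pow, Real.sq_sqrt (by norm_num : (0:ℝ) ≤ 2)]; ring]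
    exact Real.sqrt_sq (by positivity)
  have hs2 : Real.sqrt 2 ≠ 0 := by positivity
  rw [θfun, h2, h3]
  field_simp
  ring_nf


lemma theta_nonneg {σ r : ℝ} (hσ : 0 < σ) (hr : 0 ≤ r) : 1 ≤ θfun σ r := by
  have h : σ^2/2 ≤ Real.sqrt (σ^4/4 + 2*σ^2*r) := by
    rw [show σ^4/4 = (σ^2/2)^2 by ring] at *
    calc σ^2/2 = Real.sqrt ((σ^2/2)^2) := (Real.sqrt_sq (by positivity)).symm
    _ ≤ _ := Real.sqrt_le_sqrt (by nlinarith)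
  rw [θfun]
  rw [le_div_iff₀ (by positivity), one_mul]
  linarith

lemma lemA' {b : ℝ} (hb : 0 < b) :
    ∫⁻ u in Ioi (0:ℝ), ENNReal.ofReal (u ^ (-(1:ℝ)/2) * Real.exp (-(b*u)))
      = ENNReal.ofReal (Real.sqrt π / Real.sqrt b) := by
  rw [← lemA hb]
  rw [← ofReal_integral_eq_lintegral_ofReal (lemAint hb)]
  exact (ae_restrict_iff' measurableSet_Ioi).2 (ae_of_all _ fun u hu => by
    have : (0:ℝ) < u := hu
    positivity)

lemma lemC2 {a r : ℝ} (ha : 0 < a) (hr : 0 < r) :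
    ∫⁻ u in Ioi (0:ℝ),
        ENNReal.ofReal (Real.exp (-(a*u)) * (1 - Real.exp (-(r*u))) * u ^ (-(3:ℝ)/2))
      = ENNReal.ofReal (2 * Real.sqrt π * (Real.sqrt (a + r) - Real.sqrt a)) := by
  have step1 : ∀ u : ℝ, u ∈ Ioi (0:ℝ) →
      ENNReal.ofReal (Real.exp (-(a*u)) * (1 - Real.exp (-(r*u))) * u ^ (-(3:ℝ)/2))
        = ∫⁻ t in Ioc (0:ℝ) 1,
            ENNReal.ofReal (r * (u ^ (-(1:ℝ)/2) * Real.exp (-((a + r*t)*u)))) := by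
    intro u hu
    have hu' : (0:ℝ) < u := hu
    have hrw : ∀ t : ℝ, r * (u ^ (-(1:ℝ)/2) * Real.exp (-((a + r*t)*u)))
        = (u ^ (-(3:ℝ)/2) * Real.exp (-(a*u))) * ((r*u) * Real.exp (-((r*u)*t))) := by
      intro t
      have h1 : u ^ (-(3:ℝ)/2) * u = u ^ (-(1:ℝ)/2) := by
        rw [← Real.rpow_add_one hu'.ne']
        norm_num
      rw [← h1, show -((a + r*t)*u) = -(a*u) + -((r*u)*t) by ring, Real.exp_add]
      ring
    have key : ∫ t in (0:ℝ)..1, r * (u ^ (-(1:ℝ)/2) * Real.exp (-((a + r*t)*u)))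
        = Real.exp (-(a*u)) * (1 - Real.exp (-(r*u))) * u ^ (-(3:ℝ)/2) := by
      simp_rw [hrw]
      rw [intervalIntegral.integral_const_mul, lemB2]
      ring
    rw [← key, intervalIntegral.integral_of_le zero_le_one,
      ofReal_integral_eq_lintegral_ofReal]
    · exact (Continuous.integrableOn_Ioc (by continuity))
    · exact ae_of_all _ fun t => by positivity
  rw [setLIntegral_congr_fun measurableSet_Ioi step1]
  rw [lintegral_lintegral_swap (by fun_prop)]
  have step2 : ∀ t : ℝ, t ∈ Ioc (0:ℝ) 1 →
      (∫⁻ u in Ioi (0:ℝ), ENNReal.ofReal (r * (u ^ (-(1:ℝ)/2) * Real.exp (-((a + r*t)*u)))))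
        = ENNReal.ofReal (r * (Real.sqrt π / Real.sqrt (a + r*t))) := by
    intro t ht
    have hb : 0 < a + r*t := by nlinarith [ht.1]
    simp_rw [ENNReal.ofReal_mul hr.le]
    rw [lintegral_const_mul' _ _ ENNReal.ofReal_ne_top, lemA' hb]
  rw [setLIntegral_congr_fun measurableSet_Ioc step2]
  rw [← ofReal_integral_eq_lintegral_ofReal]
  · rw [← intervalIntegral.integral_of_le zero_le_one, lemB ha hr]
  · rw [← IntegrableOn, ← intervalIntegrable_iff_integrableOn_Ioc_of_le zero_le_one]
    apply ContinuousOn.intervalIntegrable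
    apply ContinuousOn.mul continuousOn_const
    apply ContinuousOn.div continuousOn_const
    · exact (Real.continuous_sqrt.comp (by continuity)).continuousOn
    · intro t ht
      rw [uIcc_of_le zero_le_one] at ht
      have : 0 < a + r*t := by nlinarith [ht.1]
      exact (Real.sqrt_pos.2 this).ne'
  · exact ae_of_all _ fun t => by positivity

noncomputable def gker (a u : ℝ) : ℝ≥0∞ :=
  ENNReal.ofReal (Real.exp (-(a*u)) * u ^ (-(3:ℝ)/2))

noncomputable def Mker (a s : ℝ) : ℝ≥0∞ := ∫⁻ u in Ioi s, gker a u

lemma gker_meas {a : ℝ} : Measurable (gker a) := by unfold gker; fun_prop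

lemma Mker_meas {a : ℝ} : Measurable (Mker a) := by
  have : Mker a = fun s => ∫⁻ u, ({p : ℝ × ℝ | p.1 < p.2}.indicator
      (fun p => gker a p.2)) (s, u) := by
    funext s
    rw [Mker, ← lintegral_indicator measurableSet_Ioi]
    refine lintegral_congr fun u => ?_
    by_cases h : s < u
    · rw [indicator_of_mem (mem_Ioi.2 h), indicator_of_mem (by exact h)]
    · rw [indicator_of_notMem (fun hc => h (mem_Ioi.1 hc)), indicator_of_notMem (by exact h)]
  rw [this]
  exact Measurable.lintegral_prod_right'
    ((gker_meas.comp measurable_snd).indicator (measurableSet_lt measurable_fst measurable_snd))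

lemma lemB3 {r : ℝ} (u : ℝ) :
    ∫ s in (0:ℝ)..u, Real.exp (-(r*s)) * r = 1 - Real.exp (-(r*u)) := by
  have hderiv : ∀ s ∈ uIcc (0:ℝ) u, HasDerivAt (fun s => -Real.exp (-(r*s)))
      (Real.exp (-(r*s)) * r) s := by
    intro s _
    have h1 : HasDerivAt (fun s : ℝ => -(r*s)) (-r) s := by
      simpa using ((hasDerivAt_id s).const_mul r).fun_neg
    have h2 := ((Real.hasDerivAt_exp (-(r*s))).comp s h1).fun_neg
    refine h2.congr_deriv ?_
    ring
  have hint : IntervalIntegrable (fun s => Real.exp (-(r*s)) * r) volume 0 u :=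
    (Continuous.intervalIntegrable (by continuity)) 0 u
  rw [intervalIntegral.integral_eq_sub_of_hasDerivAt hderiv hint]
  simp
  ring

lemma lemC {a r : ℝ} (ha : 0 < a) (hr : 0 < r) :
    ∫⁻ s in Ioi (0:ℝ), ENNReal.ofReal (Real.exp (-(r*s))) * Mker a s
      = ENNReal.ofReal (2 * Real.sqrt π * (Real.sqrt (a + r) - Real.sqrt a) * r⁻¹) := by
  have h1 : ∀ s : ℝ, ENNReal.ofReal (Real.exp (-(r*s))) * Mker a s
      = ∫⁻ u, ENNReal.ofReal (Real.exp (-(r*s))) * ((Ioi s).indicator (gker a) u) := by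
    intro s
    rw [Mker, ← lintegral_indicator measurableSet_Ioi]
    exact (lintegral_const_mul' _ _ ENNReal.ofReal_ne_top).symm
  simp_rw [h1]
  have hind : Measurable (fun p : ℝ × ℝ => (Ioi p.1).indicator (gker a) p.2) := by
    have heq : (fun p : ℝ × ℝ => (Ioi p.1).indicator (gker a) p.2)
        = {p : ℝ × ℝ | p.1 < p.2}.indicator (fun p => gker a p.2) := by
      funext p
      by_cases h : p.1 < p.2
      · rw [indicator_of_mem (mem_Ioi.2 h), indicator_of_mem (by exact h)]
      · rw [indicator_of_notMem (fun hc => h (mem_Ioi.1 hc)),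
          indicator_of_notMem (by exact h)]
    rw [heq]
    exact (gker_meas.comp measurable_snd).indicator
      (measurableSet_lt measurable_fst measurable_snd)
  rw [lintegral_lintegral_swap
    (((by fun_prop : Measurable fun p : ℝ × ℝ =>
      ENNReal.ofReal (Real.exp (-(r*p.1)))).mul hind).aemeasurable)]
  have h2 : ∀ u : ℝ,
      (∫⁻ s in Ioi (0:ℝ), ENNReal.ofReal (Real.exp (-(r*s))) * ((Ioi s).indicator (gker a) u))
        = (Ioi (0:ℝ)).indicator (fun u => ENNReal.ofReal
            (Real.exp (-(a*u)) * (1 - Real.exp (-(r*u))) * u ^ (-(3:ℝ)/2) * r⁻¹)) u := by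
    intro u
    have hswap : ∀ s : ℝ, ENNReal.ofReal (Real.exp (-(r*s))) * ((Ioi s).indicator (gker a) u)
        = (Iio u).indicator (fun s => ENNReal.ofReal (Real.exp (-(r*s))) * gker a u) s := by
      intro s
      by_cases h : s < u
      · rw [indicator_of_mem (mem_Ioi.2 h), indicator_of_mem (mem_Iio.2 h)]
      · rw [indicator_of_notMem (fun hc => h (mem_Ioi.1 hc)),
          indicator_of_notMem (fun hc => h (mem_Iio.1 hc)), mul_zero]
    simp_rw [hswap]
    rw [lintegral_indicator measurableSet_Iio, Measure.restrict_restrict measurableSet_Iio,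
      show Iio u ∩ Ioi (0:ℝ) = Ioo 0 u from by rw [inter_comm, Ioi_inter_Iio],
      lintegral_mul_const' (gker a u) _ (by rw [gker]; exact ENNReal.ofReal_ne_top)]
    by_cases hu : 0 < u
    · rw [indicator_of_mem (mem_Ioi.2 hu)]
      have hexp : ∫⁻ s in Ioo (0:ℝ) u, ENNReal.ofReal (Real.exp (-(r*s)))
          = ENNReal.ofReal ((1 - Real.exp (-(r*u))) * r⁻¹) := by
        rw [setLIntegral_congr Ioo_ae_eq_Ioc,
          ← ofReal_integral_eq_lintegral_ofReal
            (Continuous.integrableOn_Ioc (by continuity))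
            (ae_of_all _ fun s => (Real.exp_pos _).le)]
        congr 1
        rw [← intervalIntegral.integral_of_le hu.le]
        have := lemB3 (r := r) u
        have h4 : ∫ s in (0:ℝ)..u, Real.exp (-(r*s))
            = (∫ s in (0:ℝ)..u, Real.exp (-(r*s)) * r) * r⁻¹ := by
          rw [← intervalIntegral.integral_mul_const]
          congr 1
          funext s
          field_simp
        rw [h4, this]
      have hnn : (0:ℝ) ≤ (1 - Real.exp (-(r*u))) * r⁻¹ := by
        have := Real.exp_le_one_iff.2 (by nlinarith : -(r*u) ≤ 0)
        have hrnn : (0:ℝ) ≤ r⁻¹ := by positivity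
        nlinarith
      rw [hexp, gker, ← ENNReal.ofReal_mul hnn]
      congr 1
      ring
    · rw [indicator_of_notMem (by simpa using hu),
        show Ioo (0:ℝ) u = ∅ from Ioo_eq_empty (by simpa using hu)]
      simp
  simp_rw [h2]
  rw [lintegral_indicator measurableSet_Ioi]
  have h5 : ∀ u : ℝ, ENNReal.ofReal
        (Real.exp (-(a*u)) * (1 - Real.exp (-(r*u))) * u ^ (-(3:ℝ)/2) * r⁻¹)
      = ENNReal.ofReal (Real.exp (-(a*u)) * (1 - Real.exp (-(r*u))) * u ^ (-(3:ℝ)/2))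
        * ENNReal.ofReal r⁻¹ := by
    intro u
    rw [← ENNReal.ofReal_mul' (by positivity)]
  simp_rw [h5]
  rw [lintegral_mul_const' _ _ ENNReal.ofReal_ne_top, lemC2 ha hr,
    ← ENNReal.ofReal_mul' (by positivity)]

lemma rep {σ r : ℝ} (hσ : 0 < σ) (hr : 0 < r) :
    ENNReal.ofReal ((θfun σ r - 1) / r)
      = ENNReal.ofReal (Real.sqrt 2 / σ / (2 * Real.sqrt π))
        * ∫⁻ s in Ioi (0:ℝ), ENNReal.ofReal (Real.exp (-(r*s))) * Mker (σ^2/8) s := by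
  rw [lemC (by positivity) hr, ← ENNReal.ofReal_mul (by positivity)]
  congr 1
  rw [theta_eq hσ hr.le]
  have hπ : Real.sqrt π ≠ 0 := by
    have := Real.pi_pos
    positivity
  field_simp

lemma key (σ : ℝ) (hσ : 0 < σ) (μ : Measure ℝ) [IsProbabilityMeasure μ]
    (hc : μ (Ioi (0:ℝ))ᶜ = 0) :
    ∫⁻ r, ENNReal.ofReal ((θfun σ r - 1) / r) ∂μ
      = ENNReal.ofReal (Real.sqrt 2 / σ / (2 * Real.sqrt π))
        * ∫⁻ s in Ioi (0:ℝ), Mker (σ^2/8) s * ENNReal.ofReal (discount μ s) := by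
  have hae : ∀ᵐ r ∂μ, r ∈ Ioi (0:ℝ) := by
    have h0 : {r : ℝ | ¬ r ∈ Ioi (0:ℝ)} = (Ioi (0:ℝ))ᶜ := rfl
    rw [ae_iff, h0]
    exact hc
  rw [lintegral_congr_ae (hae.mono fun r hr => rep hσ hr),
    lintegral_const_mul' _ _ ENNReal.ofReal_ne_top]
  congr 1
  rw [lintegral_lintegral_swap
    (((by fun_prop : Measurable fun p : ℝ × ℝ =>
        ENNReal.ofReal (Real.exp (-(p.1*p.2)))).mul
      (Mker_meas.comp measurable_snd)).aemeasurable)]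
  refine setLIntegral_congr_fun measurableSet_Ioi (fun s hs => ?_)
  have hs' : (0:ℝ) < s := hs
  rw [lintegral_mul_const _ (by fun_prop : Measurable fun r : ℝ =>
    ENNReal.ofReal (Real.exp (-(r*s))))]
  have hint : Integrable (fun r => Real.exp (-r * s)) μ := by
    refine Integrable.mono' (integrable_const (1:ℝ))
      (Continuous.aestronglyMeasurable (by continuity)) ?_
    refine hae.mono fun r hr => ?_
    rw [Real.norm_eq_abs, abs_of_pos (Real.exp_pos _)]
    exact Real.exp_le_one_iff.2 (by nlinarith [mem_Ioi.1 hr])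
  have hdisc : ENNReal.ofReal (discount μ s) = ∫⁻ r, ENNReal.ofReal (Real.exp (-(r*s))) ∂μ := by
    rw [discount, ofReal_integral_eq_lintegral_ofReal hint
      (ae_of_all _ fun r => (Real.exp_pos _).le)]
    simp_rw [neg_mul]
  rw [hdisc, mul_comm]

theorem stmt10 (σ : ℝ) (hσ : 0 < σ) (F G : Measure ℝ)
    [IsProbabilityMeasure F] [IsProbabilityMeasure G]
    (hFc : F (Ioi (0:ℝ))ᶜ = 0) (hGc : G (Ioi (0:ℝ))ᶜ = 0)
    (hdom : ∀ t : ℝ, 0 ≤ t → discount F t ≥ discount G t)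
    (hIntF : Integrable (fun r => (θfun σ r - 1) / r) F)
    (hIntG : Integrable (fun r => (θfun σ r - 1) / r) G) :
    ∫ r, (θfun σ r - 1) / r ∂F ≥ ∫ r, (θfun σ r - 1) / r ∂G := by
  have haeF : ∀ᵐ r ∂F, r ∈ Ioi (0:ℝ) := by
    rw [ae_iff, show {r : ℝ | ¬ r ∈ Ioi (0:ℝ)} = (Ioi (0:ℝ))ᶜ from rfl]; exact hFc
  have haeG : ∀ᵐ r ∂G, r ∈ Ioi (0:ℝ) := by
    rw [ae_iff, show {r : ℝ | ¬ r ∈ Ioi (0:ℝ)} = (Ioi (0:ℝ))ᶜ from rfl]; exact hGc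
  have hnnF : 0 ≤ᵐ[F] fun r => (θfun σ r - 1) / r :=
    haeF.mono fun r hr =>
      div_nonneg (by linarith [theta_nonneg hσ (le_of_lt (mem_Ioi.1 hr))]) (le_of_lt hr)
  have hnnG : 0 ≤ᵐ[G] fun r => (θfun σ r - 1) / r :=
    haeG.mono fun r hr =>
      div_nonneg (by linarith [theta_nonneg hσ (le_of_lt (mem_Ioi.1 hr))]) (le_of_lt hr)
  have hmono : ∫⁻ r, ENNReal.ofReal ((θfun σ r - 1) / r) ∂G
      ≤ ∫⁻ r, ENNReal.ofReal ((θfun σ r - 1) / r) ∂F := by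
    rw [key σ hσ F hFc, key σ hσ G hGc]
    refine mul_le_mul_right ?_ _
    refine lintegral_mono_ae ?_
    rw [ae_restrict_iff' measurableSet_Ioi]
    exact ae_of_all _ fun s hs =>
      mul_le_mul_right (ENNReal.ofReal_le_ofReal (hdom s (le_of_lt (mem_Ioi.1 hs)))) _
  have hFfin : ∫⁻ r, ENNReal.ofReal ((θfun σ r - 1) / r) ∂F ≠ ⊤ := by
    refine ne_of_lt (lt_of_le_of_lt (lintegral_mono fun r => Real.ofReal_le_enorm _) ?_)
    exact hIntF.2
  have hGfin : ∫⁻ r, ENNReal.ofReal ((θfun σ r - 1) / r) ∂G ≠ ⊤ :=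
    ne_top_of_le_ne_top hFfin hmono
  rw [ge_iff_le, integral_eq_lintegral_of_nonneg_ae hnnF hIntF.1,
    integral_eq_lintegral_of_nonneg_ae hnnG hIntG.1]
  exact (ENNReal.toReal_le_toReal hGfin hFfin).2 hmono
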